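/- Block Baillon–Haddad: for a convex and continuously differentiable f : ℝ^n → ℝ and L_i > 0, the block gradient ∇_i f is block L_i-Lipschitz continuous if and only if ∇_i f is block (1/L_i)-cocoercive. -/

import Mathlib

open scoped RealInnerProductSpace BigOperators

noncomputable section

/-- The `i`-th block of `ℝ^n = ℝ^{n 0} × ⋯ × ℝ^{n (b-1)}`. -/
abbrev Blk {b : ℕ} (n : Fin b → ℕ) (i : Fin b) := EuclideanSpace ℝ (Fin (n i))

/-- The full space `ℝ^n` decomposed into `b` blocks. -/
abbrev FullSpace {b : ℕ} (n : Fin b → ℕ) := PiLp 2 fun i => Blk n i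

/-- `U_i : ℝ^{n_i} → ℝ^n`, the injection of the `i`-th block (zero elsewhere). -/
noncomputable def blockInj {b : ℕ} (n : Fin b → ℕ) (i : Fin b) (h : Blk n i) :
    FullSpace n := WithLp.toLp 2 (Pi.single i h)

/-- `U_iᵀ : ℝ^n → ℝ^{n_i}`, extraction of the `i`-th block. -/
def blockExt {b : ℕ} (n : Fin b → ℕ) (i : Fin b) (x : FullSpace n) : Blk n i := x i

/-- `T_i : ℝ^n → ℝ^{n_i}` is block Lipschitz continuous with constant `lam`:
`‖T_i(y + U_i h) − T_i(y)‖ ≤ lam * ‖h‖` for all `y ∈ ℝ^n`, `h ∈ ℝ^{n_i}`.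
Block nonexpansive means `lam = 1`. -/
def BlockLipschitz {b : ℕ} (n : Fin b → ℕ) (i : Fin b)
    (T : FullSpace n → Blk n i) (lam : ℝ) : Prop :=
  ∀ (y : FullSpace n) (h : Blk n i), ‖T (y + blockInj n i h) - T y‖ ≤ lam * ‖h‖

/-- `T_i : ℝ^n → ℝ^{n_i}` is block `β`-cocoercive:
`⟨T_i(y + U_i h) − T_i(y), h⟩ ≥ β‖T_i(y + U_i h) − T_i(y)‖²`. -/
def BlockCocoercive {b : ℕ} (n : Fin b → ℕ) (i : Fin b)
    (T : FullSpace n → Blk n i) (β : ℝ) : Prop :=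
  ∀ (y : FullSpace n) (h : Blk n i),
    β * ‖T (y + blockInj n i h) - T y‖ ^ 2 ≤ ⟪T (y + blockInj n i h) - T y, h⟫

section BHaux
variable {E : Type*} [NormedAddCommGroup E] [InnerProductSpace ℝ E] [CompleteSpace E]

/-- derivative of f along a line, from gradient -/
lemma BH.line_hasDerivAt {f : E → ℝ} {g : E → E} (hg : ∀ x, HasGradientAt f (g x) x)
    (x d : E) (t : ℝ) :
    HasDerivAt (fun s : ℝ => f (x + s • d)) ⟪g (x + t • d), d⟫ t := by
  have h1 : HasDerivAt (fun s : ℝ => x + s • d) d t := by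
    simpa using ((hasDerivAt_id t).smul_const d).const_add x
  have h2 := (hasGradientAt_iff_hasFDerivAt.mp (hg (x + t • d))).comp_hasDerivAt t h1
  simp only [InnerProductSpace.toDual_apply_apply] at h2
  exact h2

/-- first-order convexity -/
lemma BH.first_order {f : E → ℝ} {g : E → E} (hconv : ConvexOn ℝ Set.univ f)
    (hg : ∀ x, HasGradientAt f (g x) x) (x y : E) :
    f x + ⟪g x, y - x⟫ ≤ f y := by
  set d := y - x with hd
  have hφ : ConvexOn ℝ Set.univ (fun s : ℝ => f (x + s • d)) := by
    refine ⟨convex_univ, fun a _ b _ p q hp hq hpq => ?_⟩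
    have := hconv.2 (Set.mem_univ (x + a • d)) (Set.mem_univ (x + b • d)) hp hq hpq
    have hxy : x + (p * a + q * b) • d = p • (x + a • d) + q • (x + b • d) := by
      have hx : x = p • x + q • x := by rw [← add_smul, hpq, one_smul]
      rw [smul_add, smul_add, add_smul, mul_smul, mul_smul]
      nth_rewrite 1 [hx]
      abel
    simpa [hxy] using this
  have hder : HasDerivAt (fun s : ℝ => f (x + s • d)) ⟪g x, d⟫ 0 := by
    simpa using BH.line_hasDerivAt hg x d 0
  have := hφ.le_slope_of_hasDerivAt (Set.mem_univ 0) (Set.mem_univ 1) one_pos hder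
  simp only [slope_def_field] at this
  simp only [zero_smul, add_zero, one_smul] at this
  have h1 : x + d = y := by rw [hd]; abel
  rw [h1] at this
  linarith

example : True := trivial

/-- descent lemma -/
lemma BH.descent {f : E → ℝ} {g : E → E} {L : ℝ} (hL : 0 < L)
    (hg : ∀ x, HasGradientAt f (g x) x)
    (hlip : ∀ x y : E, ‖g y - g x‖ ≤ L * ‖y - x‖) (x y : E) :
    f y ≤ f x + ⟪g x, y - x⟫ + L / 2 * ‖y - x‖ ^ 2 := by
  set d := y - x with hd
  set ψ : ℝ → ℝ := fun t => f (x + t • d) - t * ⟪g x, d⟫ - L * t ^ 2 * ‖d‖ ^ 2 / 2 with hψ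
  have hder : ∀ t : ℝ, HasDerivAt ψ (⟪g (x + t • d), d⟫ - ⟪g x, d⟫ - L * t * ‖d‖ ^ 2) t := by
    intro t
    have h1 := BH.line_hasDerivAt hg x d t
    have h2 : HasDerivAt (fun t : ℝ => t * ⟪g x, d⟫) ⟪g x, d⟫ t := by
      simpa using (hasDerivAt_id t).mul_const ⟪g x, d⟫
    have h3 : HasDerivAt (fun t : ℝ => L * t ^ 2 * ‖d‖ ^ 2 / 2) (L * t * ‖d‖ ^ 2) t := by
      have := (((hasDerivAt_pow 2 t).const_mul L).mul_const (‖d‖ ^ 2)).div_const 2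
      convert this using 1
      exacts [rfl, rfl, by ring]
    exact (h1.sub h2).sub h3
  have hanti : AntitoneOn ψ (Set.Icc 0 1) := by
    apply antitoneOn_of_deriv_nonpos (convex_Icc 0 1)
    · exact (Differentiable.continuous fun t => (hder t).differentiableAt).continuousOn
    · exact fun t _ => ((hder t).differentiableAt).differentiableWithinAt
    · intro t ht
      rw [interior_Icc] at ht
      rw [(hder t).deriv]
      have h1 : ⟪g (x + t • d) - g x, d⟫ ≤ L * t * ‖d‖ ^ 2 := by
        calc ⟪g (x + t • d) - g x, d⟫ ≤ ‖g (x + t • d) - g x‖ * ‖d‖ :=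
              real_inner_le_norm _ _
          _ ≤ (L * ‖(x + t • d) - x‖) * ‖d‖ := by
              gcongr; exact hlip x (x + t • d)
          _ = L * t * ‖d‖ ^ 2 := by
              rw [add_sub_cancel_left, norm_smul, Real.norm_eq_abs,
                abs_of_pos ht.1]; ring
      rw [inner_sub_left] at h1
      linarith
  have := hanti (Set.mem_Icc.mpr ⟨le_refl 0, zero_le_one⟩)
    (Set.mem_Icc.mpr ⟨zero_le_one, le_refl 1⟩) zero_le_one
  simp only [hψ] at this
  simp only [zero_smul, add_zero, one_smul, zero_pow, one_pow] at this
  have h1 : x + d = y := by rw [hd]; abel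
  rw [h1] at this
  norm_num at this
  linarith

lemma BH.lower_bound {f : E → ℝ} {g : E → E} {L : ℝ} (hL : 0 < L)
    (hconv : ConvexOn ℝ Set.univ f) (hg : ∀ x, HasGradientAt f (g x) x)
    (hlip : ∀ x y : E, ‖g y - g x‖ ≤ L * ‖y - x‖) (x y : E) :
    f x + ⟪g x, y - x⟫ + 1 / (2 * L) * ‖g y - g x‖ ^ 2 ≤ f y := by
  set w := g y - g x with hw
  set z := y - L⁻¹ • w with hz
  have h1 := BH.descent hL hg hlip y z
  have h2 := BH.first_order hconv hg x z
  have hzy : z - y = -(L⁻¹ • w) := by rw [hz]; abel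
  have hnorm : ‖z - y‖ ^ 2 = L⁻¹ ^ 2 * ‖w‖ ^ 2 := by
    rw [hzy, norm_neg, norm_smul, Real.norm_eq_abs, abs_of_pos (inv_pos.mpr hL), mul_pow]
  have hinner1 : ⟪g y, z - y⟫ = -(L⁻¹ * ⟪g y, w⟫) := by
    rw [hzy, inner_neg_right, real_inner_smul_right]
  have hinner2 : ⟪g x, z - x⟫ = ⟪g x, y - x⟫ - L⁻¹ * ⟪g x, w⟫ := by
    have : z - x = (y - x) - L⁻¹ • w := by rw [hz]; abel
    rw [this, inner_sub_right, real_inner_smul_right]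
  rw [hinner1, hnorm] at h1
  rw [hinner2] at h2
  have hww : ⟪g y, w⟫ - ⟪g x, w⟫ = ‖w‖ ^ 2 := by
    rw [← inner_sub_left, ← hw, real_inner_self_eq_norm_sq]
  have hL' : L⁻¹ = 1 / L := by rw [one_div]
  have h3 : f x + ⟪g x, y - x⟫ + L⁻¹ * (⟪g y, w⟫ - ⟪g x, w⟫)
      - L / 2 * (L⁻¹ ^ 2 * ‖w‖ ^ 2) ≤ f y := by ring_nf; ring_nf at h1 h2; linarith
  rw [hww] at h3
  have key : L⁻¹ * ‖w‖ ^ 2 - L / 2 * (L⁻¹ ^ 2 * ‖w‖ ^ 2) = 1 / (2 * L) * ‖w‖ ^ 2 := by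
    field_simp; ring
  linarith

lemma BH.cocoercive {f : E → ℝ} {g : E → E} {L : ℝ} (hL : 0 < L)
    (hconv : ConvexOn ℝ Set.univ f) (hg : ∀ x, HasGradientAt f (g x) x)
    (hlip : ∀ x y : E, ‖g y - g x‖ ≤ L * ‖y - x‖) (x y : E) :
    1 / L * ‖g y - g x‖ ^ 2 ≤ ⟪g y - g x, y - x⟫ := by
  have h1 := BH.lower_bound hL hconv hg hlip x y
  have h2 := BH.lower_bound hL hconv hg hlip y x
  have e1 : ⟪g y, x - y⟫ = -⟪g y, y - x⟫ := by rw [← inner_neg_right]; congr 1; abel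
  have e2 : ‖g x - g y‖ = ‖g y - g x‖ := norm_sub_rev _ _
  rw [e1, e2] at h2
  have e3 : ⟪g y - g x, y - x⟫ = ⟪g y, y - x⟫ - ⟪g x, y - x⟫ := inner_sub_left _ _ _
  have : 1 / (2 * L) * ‖g y - g x‖ ^ 2 + 1 / (2 * L) * ‖g y - g x‖ ^ 2
      ≤ ⟪g y, y - x⟫ - ⟪g x, y - x⟫ := by linarith
  have hhalf : 1 / (2 * L) + 1 / (2 * L) = 1 / L := by
    rw [← two_mul, one_div, mul_inv, ← mul_assoc, mul_inv_cancel₀ two_ne_zero, one_mul, one_div]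
  rw [e3]; nlinarith [this, hhalf]

/-- `blockInj` as a continuous linear map. -/
noncomputable def blockInjL {b : ℕ} (n : Fin b → ℕ) (i : Fin b) :
    Blk n i →L[ℝ] FullSpace n :=
  LinearMap.toContinuousLinearMap
    { toFun := blockInj n i
      map_add' := fun a c => by
        simp only [blockInj]; exact congrArg (WithLp.toLp 2) (Pi.single_add i a c)
      map_smul' := fun r a => by
        simp only [blockInj, RingHom.id_apply]; exact congrArg (WithLp.toLp 2) (Pi.single_smul i r a) }

@[simp] lemma blockInjL_apply {b : ℕ} (n : Fin b → ℕ) (i : Fin b) (h : Blk n i) :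
    blockInjL n i h = blockInj n i h := rfl

lemma inner_blockInj {b : ℕ} (n : Fin b → ℕ) (i : Fin b) (x : FullSpace n) (h : Blk n i) :
    ⟪x, blockInj n i h⟫ = ⟪x i, h⟫ := by
  rw [PiLp.inner_apply]
  rw [Finset.sum_eq_single i]
  · congr 1
    simp [blockInj]
  · intro j _ hj
    have : blockInj n i h j = 0 := Pi.single_eq_of_ne hj h
    rw [this, inner_zero_right]
  · intro hi; exact absurd (Finset.mem_univ i) hi

variable {b : ℕ} (n : Fin b → ℕ) (i : Fin b)

lemma BH.restrict_convex {f : FullSpace n → ℝ} (hconv : ConvexOn ℝ Set.univ f)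
    (y₀ : FullSpace n) :
    ConvexOn ℝ Set.univ (fun h : Blk n i => f (y₀ + blockInjL n i h)) := by
  refine ⟨convex_univ, fun h1 _ h2 _ p q hp hq hpq => ?_⟩
  have := hconv.2 (Set.mem_univ (y₀ + blockInjL n i h1))
    (Set.mem_univ (y₀ + blockInjL n i h2)) hp hq hpq
  have hy : y₀ + blockInjL n i (p • h1 + q • h2)
      = p • (y₀ + blockInjL n i h1) + q • (y₀ + blockInjL n i h2) := by
    have hy0 : y₀ = p • y₀ + q • y₀ := by rw [← add_smul, hpq, one_smul]
    rw [map_add, map_smul, map_smul, smul_add, smul_add]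
    nth_rewrite 1 [hy0]
    abel
  simpa only [hy, smul_eq_mul] using this

lemma BH.restrict_gradient {f : FullSpace n → ℝ} (hdiff : ContDiff ℝ 1 f)
    (y₀ : FullSpace n) (h : Blk n i) :
    HasGradientAt (fun k : Blk n i => f (y₀ + blockInjL n i k))
      (blockExt n i (gradient f (y₀ + blockInjL n i h))) h := by
  set z := y₀ + blockInjL n i h with hz
  have hdf : DifferentiableAt ℝ f z := (hdiff.differentiable one_ne_zero) z
  have hgrad : HasFDerivAt f (InnerProductSpace.toDual ℝ _ (gradient f z)) z :=
    hasGradientAt_iff_hasFDerivAt.mp hdf.hasGradientAt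
  have haff : HasFDerivAt (fun k : Blk n i => y₀ + blockInjL n i k) (blockInjL n i) h :=
    (blockInjL n i).hasFDerivAt.const_add y₀
  have hcomp := hgrad.comp h haff
  rw [hasGradientAt_iff_hasFDerivAt]
  convert hcomp using 1
  · rfl
  · rfl
  · rfl
  ext k
  simp only [ContinuousLinearMap.coe_comp', Function.comp_apply,
    InnerProductSpace.toDual_apply_apply]
  rw [blockInjL_apply, inner_blockInj]
  rfl

theorem block_baillon_haddad'
    (f : FullSpace n → ℝ) (hconv : ConvexOn ℝ Set.univ f)
    (hdiff : ContDiff ℝ 1 f) (Li : ℝ) (hLi : 0 < Li)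
    (hlip : ∀ (y : FullSpace n) (h : Blk n i),
      ‖blockExt n i (gradient f (y + blockInj n i h)) - blockExt n i (gradient f y)‖ ≤ Li * ‖h‖)
    (y : FullSpace n) (h : Blk n i) :
    1 / Li * ‖blockExt n i (gradient f (y + blockInj n i h)) - blockExt n i (gradient f y)‖ ^ 2
      ≤ ⟪blockExt n i (gradient f (y + blockInj n i h)) - blockExt n i (gradient f y), h⟫ := by
  set F := fun k : Blk n i => f (y + blockInjL n i k) with hF
  set g := fun k : Blk n i => blockExt n i (gradient f (y + blockInjL n i k)) with hg
  have hgF : ∀ k, HasGradientAt F (g k) k := fun k => BH.restrict_gradient n i hdiff y k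
  have hlip' : ∀ k1 k2 : Blk n i, ‖g k2 - g k1‖ ≤ Li * ‖k2 - k1‖ := by
    intro k1 k2
    have e : y + blockInjL n i k2 = (y + blockInjL n i k1) + blockInj n i (k2 - k1) := by
      rw [← blockInjL_apply, map_sub]; abel
    have := hlip (y + blockInjL n i k1) (k2 - k1)
    rw [← e] at this
    simpa [g] using this
  have key := BH.cocoercive hLi (BH.restrict_convex n i hconv y) hgF hlip' 0 h
  have hg0 : g 0 = blockExt n i (gradient f y) := by simp only [g, map_zero, add_zero]
  have hgh : g h = blockExt n i (gradient f (y + blockInj n i h)) := by simp [g]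
  rw [hg0, hgh, sub_zero] at key
  exact key


end BHaux

/-- block Baillon–Haddad: for convex continuously differentiable
`f`, the block gradient `∇_i f` is block `L_i`-Lipschitz iff it is block
`(1/L_i)`-cocoercive. -/
theorem block_baillon_haddad {b : ℕ} (n : Fin b → ℕ) (i : Fin b)
    (f : FullSpace n → ℝ) (hconv : ConvexOn ℝ Set.univ f)
    (hdiff : ContDiff ℝ 1 f) (Li : ℝ) (hLi : 0 < Li) :
    BlockLipschitz n i (fun x => blockExt n i (gradient f x)) Li
      ↔ BlockCocoercive n i (fun x => blockExt n i (gradient f x)) (1 / Li) := by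
  constructor
  · intro hlip y h
    exact block_baillon_haddad' n i f hconv hdiff Li hLi hlip y h
  · intro hco y h
    dsimp only
    set d := blockExt n i (gradient f (y + blockInj n i h)) - blockExt n i (gradient f y)
      with hd
    have h1 := hco y h
    dsimp only at h1
    have h2 : ⟪d, h⟫ ≤ ‖d‖ * ‖h‖ := real_inner_le_norm d h
    rcases eq_or_lt_of_le (norm_nonneg d) with hzero | hpos
    · rw [← hzero]; positivity
    · rw [← hd] at h1
      have : 1 / Li * ‖d‖ ^ 2 ≤ ‖d‖ * ‖h‖ := le_trans h1 h2
      have h3 : ‖d‖ ^ 2 ≤ Li * (‖d‖ * ‖h‖) := by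
        have h4 := mul_le_mul_of_nonneg_left this (le_of_lt hLi)
        rwa [← mul_assoc, mul_one_div, div_self (ne_of_gt hLi), one_mul] at h4
      nlinarith [hpos]
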